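/- Assume λ₁ ≠ λ₂ and λ₂ ≠ 0. Then for every natural number m, the polynomials h₁ and σ^m(h₂) have no common non-unit factor; that is, the spread set Spr_σ(h₁, h₂) is empty (and by symmetry, so is Spr_σ(h₂, h₁) when λ₁ ≠ 0). -/

import Mathlib

open MvPolynomial

private lemma coprime_X0_X1 {F : Type*} [Field F] (d : MvPolynomial (Fin 2) F)
    (h0 : d ∣ X 0) (h1 : d ∣ X 1) : IsUnit d := by
  set e := finSuccEquiv F 1 with he
  have h0' : e d ∣ Polynomial.X := by
    rw [← finSuccEquiv_X_zero (R := F) (n := 1)]; exact map_dvd e h0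
  have h1' : e d ∣ Polynomial.C (X 0) := by
    have h : (1 : Fin 2) = Fin.succ 0 := rfl
    rw [h] at h1
    rw [← finSuccEquiv_X_succ (R := F) (n := 1) (j := 0)]; exact map_dvd e h1
  obtain ⟨c, hc⟩ := h0'
  rcases (Polynomial.prime_X (R := MvPolynomial (Fin 1) F)).irreducible.isUnit_or_isUnit hc
    with h | h
  · have := h.map e.symm.toAlgHom
    simpa using this
  · exfalso
    obtain ⟨cu, hcu⟩ := h
    have hXd : (Polynomial.X : Polynomial (MvPolynomial (Fin 1) F)) ∣ e d := by
      refine ⟨↑cu⁻¹, ?_⟩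
      rw [hc, ← hcu]
      rw [mul_assoc, Units.mul_inv, mul_one]
    have hX : (Polynomial.X : Polynomial (MvPolynomial (Fin 1) F)) ∣ Polynomial.C (X 0) :=
      hXd.trans h1'
    rw [Polynomial.X_dvd_iff, Polynomial.coeff_C_zero] at hX
    exact X_ne_zero 0 hX

private lemma common_div_unit {F : Type*} [Field F] (u lam₁ lam₂ : F) (hu : u ≠ 0)
    (hne : lam₁ ≠ lam₂) (d : MvPolynomial (Fin 2) F)
    (h1 : d ∣ C u * X 0 + C lam₁ * X 1) (h2 : d ∣ C u * X 0 + C lam₂ * X 1) :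
    IsUnit d := by
  have hβ : d ∣ C (lam₁ - lam₂) * X 1 := by
    have := dvd_sub h1 h2
    convert this using 1
    rw [map_sub]
    ring
  have hα : d ∣ C (u * (lam₂ - lam₁)) * X 0 := by
    have := dvd_sub (Dvd.dvd.mul_left h1 (C lam₂)) (Dvd.dvd.mul_left h2 (C lam₁))
    convert this using 1
    rw [map_mul, map_sub]
    ring
  have hb : d ∣ X 1 := by
    have hc : IsUnit (C (lam₁ - lam₂) : MvPolynomial (Fin 2) F) :=
      (sub_ne_zero.2 hne).isUnit.map C
    exact hc.dvd_mul_left.1 hβ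
  have ha : d ∣ X 0 := by
    have hc : IsUnit (C (u * (lam₂ - lam₁)) : MvPolynomial (Fin 2) F) :=
      (mul_ne_zero hu (sub_ne_zero.2 (Ne.symm hne))).isUnit.map C
    exact hc.dvd_mul_left.1 hα
  exact coprime_X0_X1 d ha hb

private lemma sigma_iter {F : Type*} [Field F] (u v : F)
    (σ : MvPolynomial (Fin 2) F →ₐ[F] MvPolynomial (Fin 2) F)
    (hσα : σ (X 0) = X 1)
    (hσβ : σ (X 1) = u • X 0 + v • X 1)
    (lam : F) (hroot : lam ^ 2 = v * lam + u) (m : ℕ) :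
    (⇑σ)^[m] (C u * X 0 + C lam * X 1) = C (lam ^ m) * (C u * X 0 + C lam * X 1) := by
  have hC : ∀ a : F, σ (C a) = C a := fun a => by
    rw [← algebraMap_eq]; exact σ.commutes a
  have step : σ (C u * X 0 + C lam * X 1) = C lam * (C u * X 0 + C lam * X 1) := by
    rw [map_add, map_mul, map_mul, hC, hC, hσα, hσβ]
    rw [smul_eq_C_mul, smul_eq_C_mul]
    have h : (C (lam ^ 2) : MvPolynomial (Fin 2) F) = C (v * lam + u) := by rw [hroot]
    rw [map_pow, map_add, map_mul] at h
    ring_nf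
    ring_nf at h
    rw [h]
    ring
  induction m with
  | zero => simp
  | succ n ih =>
    rw [Function.iterate_succ_apply', ih, map_mul, step, hC, pow_succ, map_mul]
    ring

theorem spread_of_eigenpolynomials_empty
    {F : Type*} [Field F] (u v : F) (hu : u ≠ 0)
    (σ : MvPolynomial (Fin 2) F →ₐ[F] MvPolynomial (Fin 2) F)
    (hσα : σ (X 0) = X 1)
    (hσβ : σ (X 1) = u • X 0 + v • X 1)
    (lam₁ lam₂ : F)
    (hroot₁ : lam₁ ^ 2 = v * lam₁ + u)
    (hroot₂ : lam₂ ^ 2 = v * lam₂ + u)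
    (hne : lam₁ ≠ lam₂) (hlam₂ : lam₂ ≠ 0) :
    (∀ m : ℕ, ∀ d : MvPolynomial (Fin 2) F,
        d ∣ (C u * X 0 + C lam₁ * X 1) →
        d ∣ (⇑σ)^[m] (C u * X 0 + C lam₂ * X 1) → IsUnit d) ∧
    (lam₁ ≠ 0 →
      ∀ m : ℕ, ∀ d : MvPolynomial (Fin 2) F,
        d ∣ (C u * X 0 + C lam₂ * X 1) →
        d ∣ (⇑σ)^[m] (C u * X 0 + C lam₁ * X 1) → IsUnit d) := by
  constructor
  · intro m d hd1 hd2
    rw [sigma_iter u v σ hσα hσβ lam₂ hroot₂ m] at hd2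
    have hc : IsUnit (C (lam₂ ^ m) : MvPolynomial (Fin 2) F) :=
      (pow_ne_zero m hlam₂).isUnit.map C
    exact common_div_unit u lam₁ lam₂ hu hne d hd1 (hc.dvd_mul_left.1 hd2)
  · intro hlam₁ m d hd2 hd1
    rw [sigma_iter u v σ hσα hσβ lam₁ hroot₁ m] at hd1
    have hc : IsUnit (C (lam₁ ^ m) : MvPolynomial (Fin 2) F) :=
      (pow_ne_zero m hlam₁).isUnit.map C
    exact common_div_unit u lam₂ lam₁ hu (Ne.symm hne) d hd2 (hc.dvd_mul_left.1 hd1)
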